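/- Under the stationary distribution pi_n(x) = 1/((n+1) C(n,|x|)) on {0,1}^n, the number of alternations T(x) = #{1 <= i <= n-1 : x_i != x_{i+1}} has expectation (n-1)/3 and variance (n^2 + 10n - 14)/45 for all n >= 2. -/

import Mathlib

open Finset

/-- The number of ones of `x`. -/
def ones {n : ℕ} (x : Fin n → Bool) : ℕ :=
  (Finset.univ.filter (fun i => x i = true)).card

/-- The stationary distribution `π_n(x) = 1/((n+1) C(n,|x|))` on `{0,1}^n`. -/
noncomputable def statDist {n : ℕ} (x : Fin n → Bool) : ℝ :=
  1 / ((n + 1 : ℝ) * (Nat.choose n (ones x) : ℝ))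

/-- The number of alternations of a binary `(m+1)`-tuple:
`T(x) = #\{1 ≤ i ≤ n-1 : x_i ≠ x_{i+1}\}` with `n = m+1`. -/
def alternations {m : ℕ} (x : Fin (m + 1) → Bool) : ℕ :=
  (Finset.univ.filter (fun i : Fin m => x i.castSucc ≠ x i.succ)).card


lemma fiber_card {α : Type*} [Fintype α] [DecidableEq α] (k : ℕ) :
    (univ.filter fun z : α → Bool => (univ.filter fun i => z i = true).card = k).card
      = Nat.choose (Fintype.card α) k := by
  rw [← Finset.card_univ, ← Finset.card_powersetCard k (univ : Finset α)]
  apply Finset.card_bij' (fun z _ => univ.filter fun i => z i = true)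
    (fun s _ => fun i => decide (i ∈ s))
  case hi =>
    intro z hz
    simp only [Finset.mem_filter, Finset.mem_univ, true_and] at hz
    simp [Finset.mem_powersetCard, hz]
  case hj =>
    intro s hs
    simp only [Finset.mem_filter, Finset.mem_univ, true_and]
    simp [Finset.mem_powersetCard] at hs
    rw [← hs]
    congr 1
    ext i
    simp
  case left_inv =>
    intro z hz
    funext i
    simp
  case right_inv =>
    intro s hs
    ext i
    simp

lemma group_sum {α : Type*} [Fintype α] [DecidableEq α] (f : ℕ → ℝ) :
    ∑ z : α → Bool, f ((univ.filter fun i => z i = true).card)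
      = ∑ k ∈ range (Fintype.card α + 1), (Nat.choose (Fintype.card α) k : ℝ) * f k := by
  rw [← Finset.sum_fiberwise_of_maps_to
    (g := fun z : α → Bool => (univ.filter fun i => z i = true).card)
    (t := range (Fintype.card α + 1))
    (fun z _ => by
      simp only [Finset.mem_range, Nat.lt_succ_iff]
      exact (Finset.card_filter_le _ _).trans (le_of_eq (Finset.card_univ)))]
  refine Finset.sum_congr rfl fun k _ => ?_
  rw [← fiber_card (α := α) k]
  rw [Finset.sum_congr rfl (fun z hz => by
    simp only [Finset.mem_filter] at hz
    rw [hz.2])]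
  simp [mul_comm]





lemma pattern_sum {n r : ℕ} (p : Fin r → Fin n) (hp : Function.Injective p)
    (b : Fin r → Bool) :
    ∑ x : Fin n → Bool, statDist x * ∏ t : Fin r, (if x (p t) = b t then (1:ℝ) else 0)
      = ∑ k ∈ range (n - r + 1),
          (Nat.choose (n-r) k : ℝ) / ((n+1) * Nat.choose n (k + ones b)) := by
  classical
  set P : Fin n → Prop := fun i => i ∈ Set.range p with hP
  set er : {i // P i} ≃ Fin r := (Equiv.ofInjective p hp).symm with her
  set E : (Fin n → Bool) ≃ ((Fin r → Bool) × ({i // ¬ P i} → Bool)) :=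
    (Equiv.piEquivPiSubtypeProd P (fun _ => Bool)).trans
      (Equiv.prodCongr (Equiv.arrowCongr er (Equiv.refl Bool)) (Equiv.refl _)) with hE
  have hx : ∀ (u : Fin r → Bool) (z : {i // ¬ P i} → Bool) (i : Fin n),
      E.symm (u, z) i = if h : P i then u (er ⟨i, h⟩) else z ⟨i, h⟩ := by
    intro u z i
    simp [hE, Equiv.piEquivPiSubtypeProd, Equiv.arrowCongr]
  have hxp : ∀ (u : Fin r → Bool) (z : {i // ¬ P i} → Bool) (t : Fin r),
      E.symm (u, z) (p t) = u t := by
    intro u z t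
    have hPt : P (p t) := ⟨t, rfl⟩
    rw [hx, dif_pos hPt]
    congr 1
    have h2 : (⟨p t, hPt⟩ : {i // P i}) = Equiv.ofInjective p hp t := rfl
    rw [h2, her]
    exact (Equiv.ofInjective p hp).symm_apply_apply t
  have hones : ∀ (u : Fin r → Bool) (z : {i // ¬ P i} → Bool),
      ones (E.symm (u, z)) = ones u + (univ.filter fun i : {i // ¬ P i} => z i = true).card := by
    intro u z
    unfold ones
    rw [Finset.card_filter, Finset.card_filter, Finset.card_filter]
    rw [← Finset.sum_filter_add_sum_filter_not univ P]
    congr 1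
    · rw [Finset.sum_subtype (p := P) (univ.filter P) (by simp) (fun i => if E.symm (u,z) i = true then 1 else 0)]
      rw [← Equiv.sum_comp er (fun t => if u t = true then 1 else 0)]
      refine Finset.sum_congr rfl fun i _ => ?_
      rw [hx, dif_pos i.2]
    · rw [Finset.sum_subtype (p := fun i => ¬ P i) (univ.filter fun i => ¬ P i) (by simp) (fun i => if E.symm (u,z) i = true then 1 else 0)]
      refine Finset.sum_congr rfl fun i _ => ?_
      rw [hx, dif_neg i.2]
  have hcard : Fintype.card {i // ¬ P i} = n - r := by
    rw [Fintype.card_subtype_compl]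
    simp only [Fintype.card_fin]
    congr 1
    rw [Fintype.card_congr er, Fintype.card_fin]
  calc ∑ x : Fin n → Bool, statDist x * ∏ t : Fin r, (if x (p t) = b t then (1:ℝ) else 0)
      = ∑ uz : (Fin r → Bool) × ({i // ¬ P i} → Bool),
          statDist (E.symm uz) * ∏ t : Fin r, (if (E.symm uz) (p t) = b t then (1:ℝ) else 0) := by
        rw [E.symm.sum_comp (fun x => statDist x * ∏ t : Fin r, (if x (p t) = b t then (1:ℝ) else 0))]
    _ = ∑ u : Fin r → Bool, ∑ z : {i // ¬ P i} → Bool,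
          (1 / ((n+1 : ℝ) * Nat.choose n (ones u + (univ.filter fun i : {i // ¬ P i} => z i = true).card)))
          * (if u = b then (1:ℝ) else 0) := by
        rw [Fintype.sum_prod_type]
        refine Finset.sum_congr rfl fun u _ => Finset.sum_congr rfl fun z _ => ?_
        rw [show statDist (E.symm (u, z)) = 1 / ((n+1 : ℝ) * Nat.choose n (ones (E.symm (u,z)))) from rfl]
        rw [hones u z]
        congr 1
        rw [show (∏ t : Fin r, (if (E.symm (u,z)) (p t) = b t then (1:ℝ) else 0))
            = ∏ t : Fin r, (if u t = b t then (1:ℝ) else 0) from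
          Finset.prod_congr rfl fun t _ => by rw [hxp]]
        by_cases h : u = b
        · subst h; simp
        · rw [if_neg h]
          obtain ⟨t, ht⟩ := Function.ne_iff.mp h
          exact Finset.prod_eq_zero (Finset.mem_univ t) (if_neg ht)
    _ = ∑ z : {i // ¬ P i} → Bool,
          (1 / ((n+1 : ℝ) * Nat.choose n ((univ.filter fun i : {i // ¬ P i} => z i = true).card + ones b))) := by
        rw [Finset.sum_comm]
        refine Finset.sum_congr rfl fun z _ => ?_
        rw [Finset.sum_eq_single b (fun u _ hu => by rw [if_neg hu, mul_zero])
          (fun h => absurd (Finset.mem_univ b) h)]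
        rw [if_pos rfl, mul_one, add_comm (ones b)]
    _ = ∑ k ∈ range (n - r + 1),
          (Nat.choose (n-r) k : ℝ) / ((n+1) * Nat.choose n (k + ones b)) := by
        rw [group_sum (fun k => 1 / ((n+1 : ℝ) * Nat.choose n (k + ones b)))]
        rw [hcard]
        exact Finset.sum_congr rfl fun k _ => mul_one_div _ _

lemma sumA (a : ℝ) : ∀ t : ℕ, ∑ k ∈ range t, ((k:ℝ)+1)*(a-(k:ℝ))
    = (1/3)*t - (1/3)*t^3 + (1/2)*a*t + (1/2)*a*t^2 := by
  intro t
  induction t with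
  | zero => simp
  | succ t ih => rw [Finset.sum_range_succ, ih]; push_cast; ring

lemma atom1 (n k : ℕ) : (k+1) * Nat.choose n (k+1) = n * Nat.choose (n-1) k := by
  cases n with
  | zero => simp
  | succ n =>
      have := Nat.add_one_mul_choose_eq n k
      simpa [Nat.succ_eq_add_one, mul_comm] using this.symm

lemma atom2 (n k : ℕ) : (n - k) * Nat.choose n k = n * Nat.choose (n-1) k := by
  cases n with
  | zero => simp
  | succ n =>
      have := Nat.choose_mul_succ_eq n k
      simpa [Nat.succ_eq_add_one, mul_comm] using this.symm

lemma R21 (n k : ℕ) : (k+1) * ((n-1) - k) * Nat.choose n (k+1)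
    = n * ((n-1) * Nat.choose (n-2) k) := by
  have h1 := atom1 n k
  have h2 := atom2 (n-1) k
  have h3 : n - 1 - 1 = n - 2 := by omega
  calc (k+1) * ((n-1) - k) * Nat.choose n (k+1)
      = ((n-1)-k) * ((k+1) * Nat.choose n (k+1)) := by ring
    _ = ((n-1)-k) * (n * Nat.choose (n-1) k) := by rw [h1]
    _ = n * (((n-1)-k) * Nat.choose (n-1) k) := by ring
    _ = n * ((n-1) * Nat.choose (n-2) k) := by rw [h2, h3]

lemma inst21 {n : ℕ} (hn : 2 ≤ n) :
    ∑ k ∈ range (n-2+1), (Nat.choose (n-2) k : ℝ) / ((n+1) * Nat.choose n (k+1)) = 1/6 := by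
  have h0 : (0:ℝ) < n := by exact_mod_cast (by omega : 0 < n)
  have h1 : (0:ℝ) < (n:ℝ) - 1 := by
    have : (1:ℝ) < n := by exact_mod_cast (by omega : 1 < n)
    linarith
  have h2 : (0:ℝ) < (n:ℝ) + 1 := by linarith
  have step : ∀ k ∈ range (n-2+1),
      (Nat.choose (n-2) k : ℝ) / ((n+1) * Nat.choose n (k+1))
        = ((k:ℝ)+1)*(((n:ℝ)-1) - k) / ((n+1) * (n * ((n:ℝ)-1))) := by
    intro k hk
    rw [mem_range] at hk
    have hR := congrArg (Nat.cast : ℕ → ℝ) (R21 n k)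
    push_cast [Nat.cast_sub (show k ≤ n-1 by omega), Nat.cast_sub (show 1 ≤ n by omega),
      Nat.cast_sub (show 2 ≤ n from hn)] at hR
    have hch : (0:ℝ) < Nat.choose n (k+1) := by
      exact_mod_cast Nat.choose_pos (show k+1 ≤ n by omega)
    rw [div_eq_div_iff (by positivity) (by positivity)]
    linear_combination (-((n:ℝ)+1)) * hR
  rw [Finset.sum_congr rfl step, ← Finset.sum_div]
  have hs := sumA ((n:ℝ)-1) (n-2+1)
  have hT : ((n-2+1 : ℕ) : ℝ) = (n:ℝ) - 1 := by
    push_cast [Nat.cast_sub (show 2 ≤ n from hn)]; ring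
  rw [hT] at hs
  rw [hs]
  field_simp
  ring

lemma sumB (a b : ℝ) : ∀ t : ℕ, ∑ k ∈ range t, ((k:ℝ)+1)*(a-(k:ℝ))*(b-(k:ℝ))
    = (1/6)*t - (1/4)*t^2 - (1/6)*t^3 + (1/4)*t^4 + (1/3)*b*t - (1/3)*b*t^3
      + (1/3)*a*t - (1/3)*a*t^3 + (1/2)*a*b*t + (1/2)*a*b*t^2 := by
  intro t
  induction t with
  | zero => simp
  | succ t ih => rw [Finset.sum_range_succ, ih]; push_cast; ring

lemma sumC (a : ℝ) : ∀ t : ℕ, ∑ k ∈ range t, ((k:ℝ)+1)*((k:ℝ)+2)*(a-(k:ℝ))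
    = (1/2)*t + (1/4)*t^2 - (1/2)*t^3 - (1/4)*t^4 + (2/3)*a*t + a*t^2 + (1/3)*a*t^3 := by
  intro t
  induction t with
  | zero => simp
  | succ t ih => rw [Finset.sum_range_succ, ih]; push_cast; ring

lemma sumD (a b : ℝ) : ∀ t : ℕ, ∑ k ∈ range t, ((k:ℝ)+1)*((k:ℝ)+2)*(a-(k:ℝ))*(b-(k:ℝ))
    = (3/10)*t - (1/4)*t^2 - (1/2)*t^3 + (1/4)*t^4 + (1/5)*t^5
      + (1/2)*b*t + (1/4)*b*t^2 - (1/2)*b*t^3 - (1/4)*b*t^4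
      + (1/2)*a*t + (1/4)*a*t^2 - (1/2)*a*t^3 - (1/4)*a*t^4
      + (2/3)*a*b*t + a*b*t^2 + (1/3)*a*b*t^3 := by
  intro t
  induction t with
  | zero => simp
  | succ t ih => rw [Finset.sum_range_succ, ih]; push_cast; ring

lemma R31 (n k : ℕ) : (k+1) * ((n-1) - k) * ((n-2) - k) * Nat.choose n (k+1)
    = n * ((n-1) * ((n-2) * Nat.choose (n-3) k)) := by
  have h1 := R21 n k
  have h2 := atom2 (n-2) k
  have h3 : n - 2 - 1 = n - 3 := by omega
  calc (k+1) * ((n-1) - k) * ((n-2) - k) * Nat.choose n (k+1)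
      = ((n-2)-k) * ((k+1) * ((n-1)-k) * Nat.choose n (k+1)) := by ring
    _ = ((n-2)-k) * (n * ((n-1) * Nat.choose (n-2) k)) := by rw [h1]
    _ = n * ((n-1) * (((n-2)-k) * Nat.choose (n-2) k)) := by ring
    _ = n * ((n-1) * ((n-2) * Nat.choose (n-3) k)) := by rw [h2, h3]

lemma R32 (n k : ℕ) : (k+1) * ((k+2) * (((n-2) - k) * Nat.choose n (k+2)))
    = n * ((n-1) * ((n-2) * Nat.choose (n-3) k)) := by
  have h1 := atom1 n (k+1)
  have h2 := atom1 (n-1) k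
  have h3 := atom2 (n-2) k
  have h4 : n - 1 - 1 = n - 2 := by omega
  have h5 : n - 2 - 1 = n - 3 := by omega
  calc (k+1) * ((k+2) * (((n-2) - k) * Nat.choose n (k+2)))
      = (((n-2))-k) * ((k+1+1) * Nat.choose n (k+1+1)) * (k+1) := by ring
    _ = (((n-2))-k) * (n * Nat.choose (n-1) (k+1)) * (k+1) := by rw [h1]
    _ = n * ((((n-2))-k) * ((k+1) * Nat.choose (n-1) (k+1))) := by ring
    _ = n * ((((n-2))-k) * ((n-1) * Nat.choose (n-1-1) k)) := by rw [h2]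
    _ = n * ((n-1) * ((((n-2))-k) * Nat.choose (n-2) k)) := by rw [h4]; ring
    _ = n * ((n-1) * ((n-2) * Nat.choose (n-3) k)) := by rw [h3, h5]

lemma R42 (n k : ℕ) : (k+1) * ((k+2) * (((n-2) - k) * (((n-3) - k) * Nat.choose n (k+2))))
    = n * ((n-1) * ((n-2) * ((n-3) * Nat.choose (n-4) k))) := by
  have h1 := R32 n k
  have h2 := atom2 (n-3) k
  have h5 : n - 3 - 1 = n - 4 := by omega
  calc (k+1) * ((k+2) * (((n-2) - k) * (((n-3) - k) * Nat.choose n (k+2))))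
      = ((n-3)-k) * ((k+1) * ((k+2) * (((n-2)-k) * Nat.choose n (k+2)))) := by ring
    _ = ((n-3)-k) * (n * ((n-1) * ((n-2) * Nat.choose (n-3) k))) := by rw [h1]
    _ = n * ((n-1) * ((n-2) * (((n-3)-k) * Nat.choose (n-3) k))) := by ring
    _ = n * ((n-1) * ((n-2) * ((n-3) * Nat.choose (n-4) k))) := by rw [h2, h5]

lemma inst31 {n : ℕ} (hn : 3 ≤ n) :
    ∑ k ∈ range (n-3+1), (Nat.choose (n-3) k : ℝ) / ((n+1) * Nat.choose n (k+1)) = 1/12 := by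
  have h0 : (0:ℝ) < n := by exact_mod_cast (by omega : 0 < n)
  have h1 : (0:ℝ) < (n:ℝ) - 1 := by
    have h1' : (1:ℝ) < n := by exact_mod_cast (by omega : 1 < n)
    linarith
  have h1' : (0:ℝ) < (n:ℝ) - 2 := by
    have h2' : (2:ℝ) < n := by exact_mod_cast (by omega : 2 < n)
    linarith
  have h2 : (0:ℝ) < (n:ℝ) + 1 := by linarith
  have step : ∀ k ∈ range (n-3+1),
      (Nat.choose (n-3) k : ℝ) / ((n+1) * Nat.choose n (k+1))
        = ((k:ℝ)+1)*(((n:ℝ)-1) - k)*(((n:ℝ)-2) - k) / ((n+1) * (n * (((n:ℝ)-1)*((n:ℝ)-2)))) := by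
    intro k hk
    rw [mem_range] at hk
    have hR := congrArg (Nat.cast : ℕ → ℝ) (R31 n k)
    push_cast [Nat.cast_sub (show k ≤ n-1 by omega), Nat.cast_sub (show k ≤ n-2 by omega),
      Nat.cast_sub (show 1 ≤ n by omega), Nat.cast_sub (show 2 ≤ n by omega)] at hR
    have hch : (0:ℝ) < Nat.choose n (k+1) := by
      exact_mod_cast Nat.choose_pos (show k+1 ≤ n by omega)
    rw [div_eq_div_iff (by positivity) (by positivity)]
    linear_combination (-((n:ℝ)+1)) * hR
  rw [Finset.sum_congr rfl step, ← Finset.sum_div]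
  have hs := sumB ((n:ℝ)-1) ((n:ℝ)-2) (n-3+1)
  have hT : ((n-3+1 : ℕ) : ℝ) = (n:ℝ) - 2 := by
    push_cast [Nat.cast_sub (show 3 ≤ n from hn)]; ring
  rw [hT] at hs
  rw [hs]
  field_simp
  ring

lemma inst32 {n : ℕ} (hn : 3 ≤ n) :
    ∑ k ∈ range (n-3+1), (Nat.choose (n-3) k : ℝ) / ((n+1) * Nat.choose n (k+2)) = 1/12 := by
  have h0 : (0:ℝ) < n := by exact_mod_cast (by omega : 0 < n)
  have h1 : (0:ℝ) < (n:ℝ) - 1 := by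
    have h1' : (1:ℝ) < n := by exact_mod_cast (by omega : 1 < n)
    linarith
  have h1' : (0:ℝ) < (n:ℝ) - 2 := by
    have h2' : (2:ℝ) < n := by exact_mod_cast (by omega : 2 < n)
    linarith
  have h2 : (0:ℝ) < (n:ℝ) + 1 := by linarith
  have step : ∀ k ∈ range (n-3+1),
      (Nat.choose (n-3) k : ℝ) / ((n+1) * Nat.choose n (k+2))
        = ((k:ℝ)+1)*((k:ℝ)+2)*(((n:ℝ)-2) - k) / ((n+1) * (n * (((n:ℝ)-1)*((n:ℝ)-2)))) := by
    intro k hk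
    rw [mem_range] at hk
    have hR := congrArg (Nat.cast : ℕ → ℝ) (R32 n k)
    push_cast [Nat.cast_sub (show k ≤ n-2 by omega),
      Nat.cast_sub (show 1 ≤ n by omega), Nat.cast_sub (show 2 ≤ n by omega)] at hR
    have hch : (0:ℝ) < Nat.choose n (k+2) := by
      exact_mod_cast Nat.choose_pos (show k+2 ≤ n by omega)
    rw [div_eq_div_iff (by positivity) (by positivity)]
    linear_combination (-((n:ℝ)+1)) * hR
  rw [Finset.sum_congr rfl step, ← Finset.sum_div]
  have hs := sumC ((n:ℝ)-2) (n-3+1)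
  have hT : ((n-3+1 : ℕ) : ℝ) = (n:ℝ) - 2 := by
    push_cast [Nat.cast_sub (show 3 ≤ n from hn)]; ring
  rw [hT] at hs
  rw [hs]
  field_simp
  ring

lemma inst42 {n : ℕ} (hn : 4 ≤ n) :
    ∑ k ∈ range (n-4+1), (Nat.choose (n-4) k : ℝ) / ((n+1) * Nat.choose n (k+2)) = 1/30 := by
  have h0 : (0:ℝ) < n := by exact_mod_cast (by omega : 0 < n)
  have h1 : (0:ℝ) < (n:ℝ) - 1 := by
    have h1' : (1:ℝ) < n := by exact_mod_cast (by omega : 1 < n)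
    linarith
  have h1' : (0:ℝ) < (n:ℝ) - 2 := by
    have h2' : (2:ℝ) < n := by exact_mod_cast (by omega : 2 < n)
    linarith
  have h1'' : (0:ℝ) < (n:ℝ) - 3 := by
    have h3' : (3:ℝ) < n := by exact_mod_cast (by omega : 3 < n)
    linarith
  have h2 : (0:ℝ) < (n:ℝ) + 1 := by linarith
  have step : ∀ k ∈ range (n-4+1),
      (Nat.choose (n-4) k : ℝ) / ((n+1) * Nat.choose n (k+2))
        = ((k:ℝ)+1)*((k:ℝ)+2)*(((n:ℝ)-2) - k)*(((n:ℝ)-3) - k)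
            / ((n+1) * (n * (((n:ℝ)-1)*(((n:ℝ)-2)*((n:ℝ)-3))))) := by
    intro k hk
    rw [mem_range] at hk
    have hR := congrArg (Nat.cast : ℕ → ℝ) (R42 n k)
    push_cast [Nat.cast_sub (show k ≤ n-2 by omega), Nat.cast_sub (show k ≤ n-3 by omega),
      Nat.cast_sub (show 1 ≤ n by omega), Nat.cast_sub (show 2 ≤ n by omega),
      Nat.cast_sub (show 3 ≤ n by omega)] at hR
    have hch : (0:ℝ) < Nat.choose n (k+2) := by
      exact_mod_cast Nat.choose_pos (show k+2 ≤ n by omega)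
    rw [div_eq_div_iff (by positivity) (by positivity)]
    linear_combination (-((n:ℝ)+1)) * hR
  rw [Finset.sum_congr rfl step, ← Finset.sum_div]
  have hs := sumD ((n:ℝ)-2) ((n:ℝ)-3) (n-4+1)
  have hT : ((n-4+1 : ℕ) : ℝ) = (n:ℝ) - 3 := by
    push_cast [Nat.cast_sub (show 4 ≤ n from hn)]; ring
  rw [hT] at hs
  rw [hs]
  field_simp
  ring

noncomputable def edgeInd {m : ℕ} (i : Fin m) (x : Fin (m+1) → Bool) : ℝ :=
  if x i.castSucc = x i.succ then 0 else 1

lemma edge_single {m : ℕ} (i : Fin m) :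
    ∑ x : Fin (m+1) → Bool, statDist x * edgeInd i x = 1/3 := by
  have hne : i.castSucc ≠ i.succ := ne_of_lt Fin.castSucc_lt_succ
  set p : Fin 2 → Fin (m+1) := ![i.castSucc, i.succ] with hp
  have hinj : Function.Injective p := by
    intro a b hab
    have hv : (p a).val = (p b).val := congrArg Fin.val hab
    fin_cases a <;> fin_cases b <;>
      first
        | rfl
        | (simp [hp] at hv; omega)
        | simp [hp] at hv
  have hpoint : ∀ x : Fin (m+1) → Bool, edgeInd i x
      = (∏ t : Fin 2, if x (p t) = (![true, false]) t then (1:ℝ) else 0)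
      + (∏ t : Fin 2, if x (p t) = (![false, true]) t then (1:ℝ) else 0) := by
    intro x
    rw [Fin.prod_univ_two, Fin.prod_univ_two]
    unfold edgeInd
    simp only [hp]
    cases h1 : x i.castSucc <;> cases h2 : x i.succ <;>
      simp [Matrix.cons_val_zero, Matrix.cons_val_one, h1, h2]
  calc ∑ x : Fin (m+1) → Bool, statDist x * edgeInd i x
      = (∑ x : Fin (m+1) → Bool, statDist x * ∏ t : Fin 2, if x (p t) = (![true, false]) t then (1:ℝ) else 0)
      + (∑ x : Fin (m+1) → Bool, statDist x * ∏ t : Fin 2, if x (p t) = (![false, true]) t then (1:ℝ) else 0) := by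
        rw [← Finset.sum_add_distrib]
        exact Finset.sum_congr rfl fun x _ => by rw [hpoint x, mul_add]
    _ = 1/3 := by
        rw [pattern_sum p hinj, pattern_sum p hinj]
        have o1 : ones ![true, false] = 1 := by decide
        have o2 : ones ![false, true] = 1 := by decide
        rw [o1, o2, inst21 (n := m+1) (by omega)]
        norm_num


lemma edge_adj {m : ℕ} (i k : Fin m) (hik : i.val + 1 = k.val) :
    ∑ x : Fin (m+1) → Bool, statDist x * (edgeInd i x * edgeInd k x) = 1/6 := by
  have hm : 2 ≤ m := by have := k.isLt; omega
  have hkc : k.castSucc = i.succ := by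
    apply Fin.ext; simp [Fin.coe_castSucc, Fin.val_succ]; omega
  set p : Fin 3 → Fin (m+1) := ![i.castSucc, i.succ, k.succ] with hp
  have hinj : Function.Injective p := by
    intro a b hab
    have hv : (p a).val = (p b).val := congrArg Fin.val hab
    fin_cases a <;> fin_cases b <;>
      first
        | rfl
        | (simp [hp] at hv; omega)
        | simp [hp] at hv
  have hpoint : ∀ x : Fin (m+1) → Bool, edgeInd i x * edgeInd k x
      = (∏ t : Fin 3, if x (p t) = (![true, false, true]) t then (1:ℝ) else 0)
      + (∏ t : Fin 3, if x (p t) = (![false, true, false]) t then (1:ℝ) else 0) := by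
    intro x
    rw [Fin.prod_univ_three, Fin.prod_univ_three]
    unfold edgeInd
    rw [hkc]
    simp only [hp]
    cases h1 : x i.castSucc <;> cases h2 : x i.succ <;> cases h3 : x k.succ <;>
      simp [Matrix.cons_val_zero, Matrix.cons_val_one, h1, h2, h3]
  calc ∑ x : Fin (m+1) → Bool, statDist x * (edgeInd i x * edgeInd k x)
      = (∑ x : Fin (m+1) → Bool, statDist x * ∏ t : Fin 3, if x (p t) = (![true, false, true]) t then (1:ℝ) else 0)
      + (∑ x : Fin (m+1) → Bool, statDist x * ∏ t : Fin 3, if x (p t) = (![false, true, false]) t then (1:ℝ) else 0) := by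
        rw [← Finset.sum_add_distrib]
        exact Finset.sum_congr rfl fun x _ => by rw [hpoint x, mul_add]
    _ = 1/6 := by
        rw [pattern_sum p hinj, pattern_sum p hinj]
        have o1 : ones ![true, false, true] = 2 := by decide
        have o2 : ones ![false, true, false] = 1 := by decide
        rw [o1, o2, inst32 (n := m+1) (by omega), inst31 (n := m+1) (by omega)]
        norm_num

lemma edge_far {m : ℕ} (i k : Fin m) (hik : i.val + 2 ≤ k.val) :
    ∑ x : Fin (m+1) → Bool, statDist x * (edgeInd i x * edgeInd k x) = 2/15 := by
  have hm : 3 ≤ m := by have := k.isLt; omega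
  set p : Fin 4 → Fin (m+1) := ![i.castSucc, i.succ, k.castSucc, k.succ] with hp
  have hinj : Function.Injective p := by
    intro a b hab
    have hv : (p a).val = (p b).val := congrArg Fin.val hab
    fin_cases a <;> fin_cases b <;>
      first
        | rfl
        | (simp [hp] at hv; omega)
        | simp [hp] at hv
  have hpoint : ∀ x : Fin (m+1) → Bool, edgeInd i x * edgeInd k x
      = (∏ t : Fin 4, if x (p t) = (![true, false, true, false]) t then (1:ℝ) else 0)
      + ((∏ t : Fin 4, if x (p t) = (![true, false, false, true]) t then (1:ℝ) else 0)
      + ((∏ t : Fin 4, if x (p t) = (![false, true, true, false]) t then (1:ℝ) else 0)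
      + (∏ t : Fin 4, if x (p t) = (![false, true, false, true]) t then (1:ℝ) else 0))) := by
    intro x
    rw [Fin.prod_univ_four, Fin.prod_univ_four, Fin.prod_univ_four, Fin.prod_univ_four]
    unfold edgeInd
    simp only [hp]
    cases h1 : x i.castSucc <;> cases h2 : x i.succ <;> cases h3 : x k.castSucc <;>
      cases h4 : x k.succ <;>
      simp [Matrix.cons_val_zero, Matrix.cons_val_one, h1, h2, h3, h4]
  calc ∑ x : Fin (m+1) → Bool, statDist x * (edgeInd i x * edgeInd k x)
      = (∑ x : Fin (m+1) → Bool, statDist x * ∏ t : Fin 4, if x (p t) = (![true, false, true, false]) t then (1:ℝ) else 0)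
      + ((∑ x : Fin (m+1) → Bool, statDist x * ∏ t : Fin 4, if x (p t) = (![true, false, false, true]) t then (1:ℝ) else 0)
      + ((∑ x : Fin (m+1) → Bool, statDist x * ∏ t : Fin 4, if x (p t) = (![false, true, true, false]) t then (1:ℝ) else 0)
      + (∑ x : Fin (m+1) → Bool, statDist x * ∏ t : Fin 4, if x (p t) = (![false, true, false, true]) t then (1:ℝ) else 0))) := by
        rw [← Finset.sum_add_distrib, ← Finset.sum_add_distrib, ← Finset.sum_add_distrib]
        exact Finset.sum_congr rfl fun x _ => by rw [hpoint x]; ring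
    _ = 2/15 := by
        rw [pattern_sum p hinj ![true, false, true, false],
          pattern_sum p hinj ![true, false, false, true],
          pattern_sum p hinj ![false, true, true, false],
          pattern_sum p hinj ![false, true, false, true]]
        have o1 : ones ![true, false, true, false] = 2 := by decide
        have o2 : ones ![true, false, false, true] = 2 := by decide
        have o3 : ones ![false, true, true, false] = 2 := by decide
        have o4 : ones ![false, true, false, true] = 2 := by decide
        rw [o1, o2, o3, o4, inst42 (n := m+1) (by omega)]
        norm_num


lemma total_mass (n : ℕ) : ∑ x : Fin n → Bool, statDist x = 1 := by
  have h := group_sum (α := Fin n) (fun k => 1/((n+1:ℝ) * Nat.choose n k))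
  simp only [Fintype.card_fin] at h
  calc ∑ x : Fin n → Bool, statDist x
      = ∑ k ∈ range (n+1), (Nat.choose n k : ℝ) * (1/((n+1) * Nat.choose n k)) := by
        rw [← h]; rfl
    _ = ∑ _k ∈ range (n+1), 1/((n:ℝ)+1) := by
        refine Finset.sum_congr rfl fun k hk => ?_
        rw [mem_range] at hk
        have h1 : (0:ℝ) < Nat.choose n k := by exact_mod_cast Nat.choose_pos (by omega)
        have h2 : (0:ℝ) < (n:ℝ)+1 := by positivity
        field_simp
    _ = 1 := by
        rw [Finset.sum_const, Finset.card_range, nsmul_eq_mul, Nat.cast_add_one]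
        have h2 : ((n:ℝ)+1) ≠ 0 := by positivity
        field_simp

lemma alt_cast {m : ℕ} (x : Fin (m+1) → Bool) :
    ((alternations x : ℕ) : ℝ) = ∑ i : Fin m, edgeInd i x := by
  unfold alternations edgeInd
  rw [Finset.card_filter]
  push_cast
  refine Finset.sum_congr rfl fun i _ => ?_
  by_cases h : x i.castSucc = x i.succ <;> simp [h]

lemma c_diag {m : ℕ} : ∑ i : Fin m, ∑ k : Fin m, (if i = k then (1:ℝ) else 0) = m := by
  simp [Finset.sum_ite_eq]

lemma c_succ {m : ℕ} (hm : 1 ≤ m) :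
    ∑ i : Fin m, ∑ k : Fin m, (if i.val + 1 = k.val then (1:ℝ) else 0) = (m:ℝ) - 1 := by
  have hinner : ∀ i : Fin m, (∑ k : Fin m, if i.val + 1 = k.val then (1:ℝ) else 0)
      = if i.val + 1 < m then 1 else 0 := by
    intro i
    by_cases h : i.val + 1 < m
    · rw [if_pos h]
      rw [Finset.sum_congr rfl (fun k _ => show (if i.val + 1 = k.val then (1:ℝ) else 0)
          = if k = ⟨i.val+1, h⟩ then (1:ℝ) else 0 from by
        by_cases hk : k = ⟨i.val+1, h⟩
        · subst hk; simp
        · rw [if_neg hk, if_neg (by simp [Fin.ext_iff] at hk ⊢; omega)])]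
      simp
    · rw [if_neg h]
      refine Finset.sum_eq_zero fun k _ => if_neg (by have := k.isLt; omega)
  rw [Finset.sum_congr rfl fun i _ => hinner i]
  have : ∑ i : Fin m, (if i.val + 1 < m then (1:ℝ) else 0)
      = ∑ v ∈ range m, (if v + 1 < m then (1:ℝ) else 0) := by
    rw [Finset.sum_range fun v => if v + 1 < m then (1:ℝ) else 0]
  rw [this, Finset.sum_ite, Finset.sum_const, Finset.sum_const]
  have hft : (range m).filter (fun v => v + 1 < m) = range (m-1) := by
    ext v; simp [Finset.mem_range]; omega
  rw [hft, Finset.card_range]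
  have : ((m - 1 : ℕ) : ℝ) = (m:ℝ) - 1 := by
    push_cast [Nat.cast_sub hm]; ring
  simp [this]

lemma Q_val {m : ℕ} (i k : Fin m) :
    ∑ x : Fin (m+1) → Bool, statDist x * (edgeInd i x * edgeInd k x)
      = 2/15 + (if i = k then (1/5 : ℝ) else 0)
        + (if i.val + 1 = k.val then (1/30:ℝ) else 0)
        + (if k.val + 1 = i.val then (1/30:ℝ) else 0) := by
  by_cases h1 : i = k
  · subst h1
    rw [if_pos rfl, if_neg (show ¬(i.val + 1 = i.val) by omega)]
    have : ∀ x : Fin (m+1) → Bool, edgeInd i x * edgeInd i x = edgeInd i x := by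
      intro x; unfold edgeInd; by_cases h : x i.castSucc = x i.succ <;> simp [h]
    rw [Finset.sum_congr rfl fun x _ => by rw [this x]]
    rw [edge_single i]
    norm_num
  · rw [if_neg h1]
    by_cases h2 : i.val + 1 = k.val
    · rw [if_pos h2, if_neg (show ¬(k.val + 1 = i.val) by omega), edge_adj i k h2]
      norm_num
    · rw [if_neg h2]
      by_cases h3 : k.val + 1 = i.val
      · rw [if_pos h3]
        rw [Finset.sum_congr rfl fun x _ => by rw [mul_comm (edgeInd i x) (edgeInd k x)]]
        rw [edge_adj k i h3]
        norm_num
      · rw [if_neg h3]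
        have hne : i.val ≠ k.val := fun hv => h1 (Fin.ext hv)
        rcases (by omega : i.val + 2 ≤ k.val ∨ k.val + 2 ≤ i.val) with hf | hf
        · rw [edge_far i k hf]; norm_num
        · rw [Finset.sum_congr rfl fun x _ => by rw [mul_comm (edgeInd i x) (edgeInd k x)]]
          rw [edge_far k i hf]
          norm_num


/-- Under `π_n` on `{0,1}^n` with `n = m+1 ≥ 2`, the alternation count `T(x)`
has mean `(n-1)/3` and variance `(n² + 10n - 14)/45`. -/
theorem alternations_mean_variance (m : ℕ) (hm : 1 ≤ m) :
    (∑ x : Fin (m + 1) → Bool, statDist x * (alternations x : ℝ) =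
        (((m : ℝ) + 1) - 1) / 3) ∧
    (∑ x : Fin (m + 1) → Bool,
        statDist x * ((alternations x : ℝ) - (((m : ℝ) + 1) - 1) / 3) ^ 2 =
      (((m : ℝ) + 1) ^ 2 + 10 * ((m : ℝ) + 1) - 14) / 45) := by
  have hmean : ∑ x : Fin (m+1) → Bool, statDist x * (alternations x : ℝ) = (m:ℝ)/3 := by
    calc ∑ x : Fin (m+1) → Bool, statDist x * (alternations x : ℝ)
        = ∑ x : Fin (m+1) → Bool, ∑ i : Fin m, statDist x * edgeInd i x := by
          refine Finset.sum_congr rfl fun x _ => ?_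
          rw [alt_cast x, Finset.mul_sum]
      _ = ∑ i : Fin m, ∑ x : Fin (m+1) → Bool, statDist x * edgeInd i x := Finset.sum_comm
      _ = ∑ _i : Fin m, (1/3 : ℝ) := Finset.sum_congr rfl fun i _ => edge_single i
      _ = (m:ℝ)/3 := by
          rw [Finset.sum_const, Finset.card_univ, Fintype.card_fin]
          push_cast; ring
  have hM2 : ∑ x : Fin (m+1) → Bool, statDist x * ((alternations x : ℝ) * (alternations x : ℝ))
      = 2/15*(m:ℝ)^2 + 1/5*(m:ℝ) + 2*((m:ℝ)-1)*(1/30) := by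
    calc ∑ x : Fin (m+1) → Bool, statDist x * ((alternations x:ℝ) * (alternations x:ℝ))
        = ∑ x : Fin (m+1) → Bool, ∑ i : Fin m, ∑ k : Fin m,
            statDist x * (edgeInd i x * edgeInd k x) := by
          refine Finset.sum_congr rfl fun x _ => ?_
          rw [alt_cast x, Finset.sum_mul_sum, Finset.mul_sum]
          refine Finset.sum_congr rfl fun i _ => ?_
          rw [Finset.mul_sum]
      _ = ∑ i : Fin m, ∑ k : Fin m, ∑ x : Fin (m+1) → Bool,
            statDist x * (edgeInd i x * edgeInd k x) := by
          rw [Finset.sum_comm]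
          exact Finset.sum_congr rfl fun i _ => Finset.sum_comm
      _ = ∑ i : Fin m, ∑ k : Fin m, ((2:ℝ)/15 + (if i = k then (1/5:ℝ) else 0)
            + (if i.val+1 = k.val then (1/30:ℝ) else 0)
            + (if k.val+1 = i.val then (1/30:ℝ) else 0)) :=
          Finset.sum_congr rfl fun i _ => Finset.sum_congr rfl fun k _ => Q_val i k
      _ = 2/15*(m:ℝ)^2 + 1/5*(m:ℝ) + 2*((m:ℝ)-1)*(1/30) := by
          simp only [Finset.sum_add_distrib]
          have e1 : ∑ _i : Fin m, ∑ _k : Fin m, (2:ℝ)/15 = 2/15*(m:ℝ)^2 := by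
            rw [Finset.sum_const, Finset.sum_const, Finset.card_univ, Fintype.card_fin,
              nsmul_eq_mul, nsmul_eq_mul]
            push_cast; ring
          have e2 : ∑ i : Fin m, ∑ k : Fin m, (if i = k then (1/5:ℝ) else 0) = 1/5*(m:ℝ) := by
            have : ∀ i k : Fin m, (if i = k then (1/5:ℝ) else 0)
                = (1/5:ℝ) * (if i = k then (1:ℝ) else 0) := by
              intro i k; split <;> ring
            simp only [this, ← Finset.mul_sum]
            rw [c_diag]
          have e3 : ∑ i : Fin m, ∑ k : Fin m, (if i.val+1 = k.val then (1/30:ℝ) else 0)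
              = ((m:ℝ)-1)*(1/30) := by
            have : ∀ i k : Fin m, (if i.val+1 = k.val then (1/30:ℝ) else 0)
                = (1/30:ℝ) * (if i.val+1 = k.val then (1:ℝ) else 0) := by
              intro i k; split <;> ring
            simp only [this, ← Finset.mul_sum]
            rw [c_succ hm]; ring
          have e4 : ∑ i : Fin m, ∑ k : Fin m, (if k.val+1 = i.val then (1/30:ℝ) else 0)
              = ((m:ℝ)-1)*(1/30) := by
            rw [Finset.sum_comm]
            have : ∀ k i : Fin m, (if k.val+1 = i.val then (1/30:ℝ) else 0)
                = (1/30:ℝ) * (if k.val+1 = i.val then (1:ℝ) else 0) := by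
              intro k i; split <;> ring
            simp only [this, ← Finset.mul_sum]
            rw [c_succ hm]; ring
          rw [e1, e2, e3, e4]; ring
  constructor
  · rw [hmean]; ring
  · have hμ : (((m:ℝ)+1)-1)/3 = (m:ℝ)/3 := by ring
    rw [hμ]
    calc ∑ x : Fin (m+1) → Bool, statDist x * ((alternations x : ℝ) - (m:ℝ)/3)^2
        = ∑ x : Fin (m+1) → Bool, (statDist x * ((alternations x:ℝ) * (alternations x:ℝ))
            - 2*((m:ℝ)/3) * (statDist x * (alternations x:ℝ))
            + ((m:ℝ)/3)^2 * statDist x) := by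
          refine Finset.sum_congr rfl fun x _ => ?_
          ring
      _ = (2/15*(m:ℝ)^2 + 1/5*(m:ℝ) + 2*((m:ℝ)-1)*(1/30))
            - 2*((m:ℝ)/3) * ((m:ℝ)/3) + ((m:ℝ)/3)^2 * 1 := by
          rw [Finset.sum_add_distrib, Finset.sum_sub_distrib, ← Finset.mul_sum,
            ← Finset.mul_sum, hM2, hmean, total_mass]
      _ = (((m : ℝ) + 1) ^ 2 + 10 * ((m : ℝ) + 1) - 14) / 45 := by ring
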